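/- Let a, b be distinct relatively prime integers greater than 1, let F = ab - a - b, and let f_A(q) = Σ_{n ∉ S, n ≤ F} q^n and g_A(q) = Σ_{n ∈ S, n ≤ F} q^n, where S = {ai + bj : i,j ∈ ℕ}. Then g_A(q) = q^F · f_A(1/q), i.e., g_A is the reciprocal polynomial of f_A (of degree F). -/

import Mathlib

open Polynomial
open scoped Classical

private lemma int_canon (a b n : ℤ) (hb : 0 < b) (hcop : IsCoprime a b) :
    ∃ x y : ℤ, 0 ≤ x ∧ x < b ∧ n = a * x + b * y := by
  obtain ⟨u, v, huv⟩ := hcop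
  refine ⟨(n * u) % b, a * ((n * u) / b) + n * v,
    Int.emod_nonneg _ hb.ne', Int.emod_lt_of_pos _ hb, ?_⟩
  have h := Int.mul_ediv_add_emod (n * u) b
  linear_combination (-n) * huv + (-a) * h

private lemma int_symm (a b : ℤ) (ha : 2 ≤ a) (hb : 2 ≤ b) (hcop : IsCoprime a b)
    (n : ℤ) (hn : 0 ≤ n) :
    (∃ i j : ℤ, 0 ≤ i ∧ 0 ≤ j ∧ n = a * i + b * j) ↔
      ¬ (∃ i j : ℤ, 0 ≤ i ∧ 0 ≤ j ∧ a * b - a - b - n = a * i + b * j) := by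
  constructor
  · rintro ⟨i, j, hi, hj, rfl⟩ ⟨i', j', hi', hj', he⟩
    have hdvd : b ∣ a * (i + i' + 1) := ⟨a - (j + j' + 1), by linarith [he]⟩
    have hdvd2 : b ∣ (i + i' + 1) := (hcop.symm).dvd_of_dvd_mul_left hdvd
    have hge : b ≤ i + i' + 1 := Int.le_of_dvd (by omega) hdvd2
    nlinarith [he]
  · intro h
    obtain ⟨x, y, hx0, hxb, hxy⟩ := int_canon a b n (by omega) hcop
    by_cases hy : 0 ≤ y
    · exact ⟨x, y, hx0, hy, hxy⟩
    · exact absurd ⟨b - 1 - x, -1 - y, by omega, by omega, by linear_combination -hxy⟩ h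

private lemma rep_iff (a b n : ℕ) :
    (∃ i j : ℕ, n = a * i + b * j) ↔
      ∃ i j : ℤ, 0 ≤ i ∧ 0 ≤ j ∧ (n : ℤ) = a * i + b * j := by
  constructor
  · rintro ⟨i, j, rfl⟩
    exact ⟨i, j, Int.ofNat_nonneg i, Int.ofNat_nonneg j, by push_cast; ring⟩
  · rintro ⟨i, j, hi, hj, h⟩
    lift i to ℕ using hi
    lift j to ℕ using hj
    exact ⟨i, j, by exact_mod_cast h⟩

private lemma nat_symm (a b : ℕ) (ha : 2 ≤ a) (hb : 2 ≤ b) (hcop : Nat.Coprime a b)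
    (n : ℕ) (hn : n ≤ a * b - a - b) :
    (∃ i j : ℕ, n = a * i + b * j) ↔
      ¬ ∃ i j : ℕ, a * b - a - b - n = a * i + b * j := by
  have hF : a + b ≤ a * b := by nlinarith
  have hcast : ((a * b - a - b - n : ℕ) : ℤ) = (a : ℤ) * b - a - b - n := by
    have : n ≤ a * b - a - b := hn
    push_cast [Nat.sub_sub]
    omega
  have hcop' : IsCoprime (a : ℤ) (b : ℤ) := Int.isCoprime_iff_gcd_eq_one.mpr hcop
  rw [rep_iff, rep_iff, hcast]
  exact int_symm a b (by exact_mod_cast ha) (by exact_mod_cast hb) hcop' n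
    (Int.ofNat_nonneg n)

private lemma reflect_sum (F : ℕ) (s : Finset ℕ) :
    Polynomial.reflect F (∑ n ∈ s, (X : ℚ[X]) ^ n) =
      ∑ n ∈ s, (X : ℚ[X]) ^ (Polynomial.revAt F n) := by
  induction s using Finset.induction with
  | empty => simp
  | insert x s hx ih =>
      rw [Finset.sum_insert hx, Finset.sum_insert hx, Polynomial.reflect_add,
        Polynomial.reflect_monomial, ih]

theorem stmt_15 (a b : ℕ) (ha : 2 ≤ a) (hb : 2 ≤ b) (hab : a ≠ b) (hcop : Nat.Coprime a b) :
    (∑ n ∈ (Finset.range (a * b - a - b + 1)).filter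
        (fun n => ∃ i j : ℕ, n = a * i + b * j), (X : ℚ[X]) ^ n) =
      Polynomial.reflect (a * b - a - b)
        (∑ n ∈ (Finset.range (a * b - a - b + 1)).filter
          (fun n => ¬ ∃ i j : ℕ, n = a * i + b * j), (X : ℚ[X]) ^ n) := by
  have hab2 : a + b ≤ a * b := by nlinarith
  have key : ∀ n ≤ a * b - a - b,
      ((∃ i j : ℕ, n = a * i + b * j) ↔ ¬ ∃ i j : ℕ, a * b - a - b - n = a * i + b * j) :=
    fun n hn => nat_symm a b ha hb hcop n hn
  rw [reflect_sum]
  have hrw : ∑ n ∈ (Finset.range (a * b - a - b + 1)).filter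
      (fun n => ¬ ∃ i j : ℕ, n = a * i + b * j), (X : ℚ[X]) ^ (Polynomial.revAt (a * b - a - b) n) =
      ∑ n ∈ (Finset.range (a * b - a - b + 1)).filter
      (fun n => ¬ ∃ i j : ℕ, n = a * i + b * j), (X : ℚ[X]) ^ (a * b - a - b - n) := by
    refine Finset.sum_congr rfl (fun n hn => ?_)
    simp only [Finset.mem_filter, Finset.mem_range] at hn
    rw [Polynomial.revAt_le (by omega)]
  rw [hrw]
  refine Finset.sum_nbij' (fun n => a * b - a - b - n) (fun n => a * b - a - b - n)
    ?_ ?_ ?_ ?_ ?_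
  · intro n hn
    simp only [Finset.mem_filter, Finset.mem_range] at hn ⊢
    exact ⟨by omega, (key n (by omega)).mp hn.2⟩
  · intro n hn
    simp only [Finset.mem_filter, Finset.mem_range] at hn ⊢
    refine ⟨by omega, (key _ (by omega)).mpr ?_⟩
    have h2 : a * b - a - b - (a * b - a - b - n) = n := by omega
    rw [h2]
    exact hn.2
  · intro n hn
    simp only [Finset.mem_filter, Finset.mem_range] at hn
    show a * b - a - b - (a * b - a - b - n) = n
    omega
  · intro n hn
    simp only [Finset.mem_filter, Finset.mem_range] at hn
    show a * b - a - b - (a * b - a - b - n) = n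
    omega
  · intro n hn
    simp only [Finset.mem_filter, Finset.mem_range] at hn
    show (X : ℚ[X]) ^ n = X ^ (a * b - a - b - (a * b - a - b - n))
    congr 1
    omega
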